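/- Let Q ≥ 1 and let s_1, …, s_m be positive integers with s_1 + ⋯ + s_m = 2Q. Let T = {1, …, 4Q} and let R = {1, …, Q} ∪ {2Q+1, …, 3Q} ⊆ T be the set of busy slots (so T \ R consists of two gaps {Q+1, …, 2Q} and {3Q+1, …, 4Q}, each of size Q). Then the following are equivalent: (i) there exist starting times t_1, …, t_m with W_i = {t_i, t_i+1, …, t_i + s_i − 1} ⊆ T for each i and |(⋃_{i=1}^m W_i) \ R| = 2Q (i.e., the events achieve total agreement 2Q); (ii) there exists a subset P ⊆ {1, …, m} with Σ_{i ∈ P} s_i = Q (i.e., the numbers s_1, …, s_m admit an equal partition). -/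

import Mathlib

private lemma tile_subset (m : ℕ) (s : Fin m → ℕ) (b : ℕ) (hb : 1 ≤ b) (A : Finset (Fin m)) :
    Finset.Icc b (b + ∑ i ∈ A, s i - 1) ⊆
      A.biUnion (fun i => Finset.Icc (b + ∑ j ∈ A.filter (· < i), s j)
        (b + ∑ j ∈ A.filter (· < i), s j + s i - 1)) := by
  induction A using Finset.induction_on_max with
  | empty => simp; omega
  | insert a A ha ih =>
    have haA : a ∉ A := fun h => absurd (ha a h) (lt_irrefl a)
    have hfa : (insert a A).filter (· < a) = A := by
      rw [Finset.filter_insert, if_neg (lt_irrefl a)]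
      exact Finset.filter_true_of_mem (fun x hx => ha x hx)
    have hfi : ∀ i ∈ A, (insert a A).filter (· < i) = A.filter (· < i) := by
      intro i hi
      rw [Finset.filter_insert, if_neg (fun h => asymm h (ha i hi))]
    intro x hx
    rw [Finset.mem_Icc] at hx
    rw [Finset.sum_insert haA] at hx
    by_cases hcase : b + ∑ i ∈ A, s i ≤ x
    · refine Finset.mem_biUnion.2 ⟨a, Finset.mem_insert_self a A, ?_⟩
      rw [hfa, Finset.mem_Icc]
      omega
    · have hx' : x ∈ Finset.Icc b (b + ∑ i ∈ A, s i - 1) := by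
        rw [Finset.mem_Icc]; omega
      obtain ⟨i, hi, hxi⟩ := Finset.mem_biUnion.1 (ih hx')
      exact Finset.mem_biUnion.2 ⟨i, Finset.mem_insert_of_mem hi, by rwa [hfi i hi]⟩

private lemma tile_bound (m : ℕ) (s : Fin m → ℕ) (A : Finset (Fin m)) {i : Fin m}
    (hi : i ∈ A) : ∑ j ∈ A.filter (· < i), s j + s i ≤ ∑ j ∈ A, s j := by
  have hsub : insert i (A.filter (· < i)) ⊆ A := by
    intro x hx
    rcases Finset.mem_insert.1 hx with h | h
    · exact h ▸ hi
    · exact Finset.mem_of_mem_filter x h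
  have h := Finset.sum_le_sum_of_subset (f := s) hsub
  rw [Finset.sum_insert (by simp)] at h
  omega

/-- Correctness of the reduction from Partition: events of lengths `s 1, …, s m`
(summing to `2Q`) can be scheduled inside the timeline `{1, …, 4Q}` with busy slots
`{1, …, Q} ∪ {2Q+1, …, 3Q}` so as to achieve total agreement `2Q` iff the numbers
`s i` admit a subset summing to `Q` (an equal partition). -/
theorem partition_reduction_correct
    (Q : ℕ) (hQ : 1 ≤ Q) (m : ℕ) (s : Fin m → ℕ)
    (hs : ∀ i, 1 ≤ s i) (hsum : ∑ i, s i = 2 * Q) :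
    (∃ t : Fin m → ℕ,
        (∀ i, Finset.Icc (t i) (t i + s i - 1) ⊆ Finset.Icc 1 (4 * Q)) ∧
        ((Finset.univ.biUnion fun i => Finset.Icc (t i) (t i + s i - 1)) \
            (Finset.Icc 1 Q ∪ Finset.Icc (2 * Q + 1) (3 * Q))).card = 2 * Q)
      ↔ (∃ P : Finset (Fin m), ∑ i ∈ P, s i = Q) := by
  have hFcard : (Finset.Icc (Q+1) (2*Q) ∪ Finset.Icc (3*Q+1) (4*Q)).card = 2*Q := by
    rw [Finset.card_union_of_disjoint, Nat.card_Icc, Nat.card_Icc]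
    · omega
    · rw [Finset.disjoint_left]
      intro a ha hb
      rw [Finset.mem_Icc] at ha hb
      omega
  constructor
  · rintro ⟨t, hsub, hcard⟩
    set W : Fin m → Finset ℕ := fun i => Finset.Icc (t i) (t i + s i - 1) with hW
    set U := Finset.univ.biUnion W with hUdef
    have hcardW : ∀ i, (W i).card = s i := by
      intro i
      rw [hW]
      simp only [Nat.card_Icc]
      have := hs i
      omega
    have hUle : U.card ≤ 2 * Q := by
      calc U.card ≤ ∑ i, (W i).card := Finset.card_biUnion_le
        _ = 2 * Q := by simp only [hcardW]; exact hsum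
    have hUR : U \ (Finset.Icc 1 Q ∪ Finset.Icc (2*Q+1) (3*Q)) = U :=
      Finset.eq_of_subset_of_card_le Finset.sdiff_subset (by omega)
    have hUcard : U.card = 2 * Q := by rw [← hUR]; exact hcard
    have hUF : U = Finset.Icc (Q+1) (2*Q) ∪ Finset.Icc (3*Q+1) (4*Q) := by
      apply Finset.eq_of_subset_of_card_le
      · intro x hx
        have hx4 : x ∈ Finset.Icc 1 (4*Q) := by
          obtain ⟨i, _, hxi⟩ := Finset.mem_biUnion.1 hx
          exact hsub i hxi
        rw [← hUR, Finset.mem_sdiff] at hx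
        obtain ⟨_, hxR⟩ := hx
        rw [Finset.mem_Icc] at hx4
        simp only [Finset.mem_union, Finset.mem_Icc] at hxR ⊢
        omega
      · omega
    have hg1 : Finset.Icc (Q+1) (2*Q) ⊆
        (Finset.univ.filter (fun i => t i ≤ 2*Q)).biUnion W := by
      intro x hx
      have hxU : x ∈ U := by rw [hUF]; exact Finset.mem_union_left _ hx
      obtain ⟨i, _, hxi⟩ := Finset.mem_biUnion.1 hxU
      refine Finset.mem_biUnion.2 ⟨i, ?_, hxi⟩
      simp only [Finset.mem_filter, Finset.mem_univ, true_and]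
      rw [hW] at hxi
      simp only [Finset.mem_Icc] at hxi
      rw [Finset.mem_Icc] at hx
      omega
    have hg2 : Finset.Icc (3*Q+1) (4*Q) ⊆
        (Finset.univ.filter (fun i => ¬ t i ≤ 2*Q)).biUnion W := by
      intro x hx
      have hxU : x ∈ U := by rw [hUF]; exact Finset.mem_union_right _ hx
      obtain ⟨i, _, hxi⟩ := Finset.mem_biUnion.1 hxU
      refine Finset.mem_biUnion.2 ⟨i, ?_, hxi⟩
      simp only [Finset.mem_filter, Finset.mem_univ, true_and]
      intro hti
      rw [hW] at hxi
      simp only [Finset.mem_Icc] at hxi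
      rw [Finset.mem_Icc] at hx
      have hmem : (2*Q+1) ∈ U := by
        refine Finset.mem_biUnion.2 ⟨i, Finset.mem_univ i, ?_⟩
        rw [hW]
        simp only [Finset.mem_Icc]
        omega
      rw [hUF] at hmem
      simp only [Finset.mem_union, Finset.mem_Icc] at hmem
      omega
    have hc1 : Q ≤ ∑ i ∈ Finset.univ.filter (fun i => t i ≤ 2*Q), s i := by
      calc Q = (Finset.Icc (Q+1) (2*Q)).card := by rw [Nat.card_Icc]; omega
        _ ≤ ((Finset.univ.filter (fun i => t i ≤ 2*Q)).biUnion W).card :=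
            Finset.card_le_card hg1
        _ ≤ ∑ i ∈ Finset.univ.filter (fun i => t i ≤ 2*Q), (W i).card :=
            Finset.card_biUnion_le
        _ = _ := by simp only [hcardW]
    have hc2 : Q ≤ ∑ i ∈ Finset.univ.filter (fun i => ¬ t i ≤ 2*Q), s i := by
      calc Q = (Finset.Icc (3*Q+1) (4*Q)).card := by rw [Nat.card_Icc]; omega
        _ ≤ ((Finset.univ.filter (fun i => ¬ t i ≤ 2*Q)).biUnion W).card :=
            Finset.card_le_card hg2
        _ ≤ ∑ i ∈ Finset.univ.filter (fun i => ¬ t i ≤ 2*Q), (W i).card :=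
            Finset.card_biUnion_le
        _ = _ := by simp only [hcardW]
    have hsplit := Finset.sum_filter_add_sum_filter_not Finset.univ
      (fun i => t i ≤ 2*Q) s
    rw [hsum] at hsplit
    exact ⟨Finset.univ.filter (fun i => t i ≤ 2*Q), by omega⟩
  · rintro ⟨P, hP⟩
    have hPc : ∑ i ∈ Pᶜ, s i = Q := by
      have := Finset.sum_add_sum_compl P s
      rw [hsum, hP] at this
      omega
    set t : Fin m → ℕ := fun i =>
      if i ∈ P then Q + 1 + ∑ j ∈ P.filter (· < i), s j
      else 3*Q + 1 + ∑ j ∈ Pᶜ.filter (· < i), s j with ht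
    have hsub : ∀ i, Finset.Icc (t i) (t i + s i - 1) ⊆ Finset.Icc 1 (4 * Q) := by
      intro i x hx
      rw [Finset.mem_Icc] at hx
      rw [Finset.mem_Icc]
      by_cases hiP : i ∈ P
      · have hb := tile_bound m s P hiP
        rw [hP] at hb
        rw [ht] at hx
        simp only [if_pos hiP] at hx
        omega
      · have hb := tile_bound m s Pᶜ (Finset.mem_compl.2 hiP)
        rw [hPc] at hb
        rw [ht] at hx
        simp only [if_neg hiP] at hx
        omega
    refine ⟨t, hsub, ?_⟩
    have hg1 : Finset.Icc (Q+1) (2*Q) ⊆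
        Finset.univ.biUnion fun i => Finset.Icc (t i) (t i + s i - 1) := by
      have h1 := tile_subset m s (Q+1) (by omega) P
      rw [hP] at h1
      have h2 : Q + 1 + Q - 1 = 2*Q := by omega
      rw [h2] at h1
      intro x hx
      obtain ⟨i, hi, hxi⟩ := Finset.mem_biUnion.1 (h1 hx)
      refine Finset.mem_biUnion.2 ⟨i, Finset.mem_univ i, ?_⟩
      rw [ht]
      simp only [if_pos hi]
      exact hxi
    have hg2 : Finset.Icc (3*Q+1) (4*Q) ⊆
        Finset.univ.biUnion fun i => Finset.Icc (t i) (t i + s i - 1) := by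
      have h1 := tile_subset m s (3*Q+1) (by omega) Pᶜ
      rw [hPc] at h1
      have h2 : 3*Q + 1 + Q - 1 = 4*Q := by omega
      rw [h2] at h1
      intro x hx
      obtain ⟨i, hi, hxi⟩ := Finset.mem_biUnion.1 (h1 hx)
      refine Finset.mem_biUnion.2 ⟨i, Finset.mem_univ i, ?_⟩
      rw [ht]
      simp only [if_neg (Finset.mem_compl.1 hi)]
      exact hxi
    have hkey : (Finset.univ.biUnion fun i => Finset.Icc (t i) (t i + s i - 1)) \
        (Finset.Icc 1 Q ∪ Finset.Icc (2 * Q + 1) (3 * Q)) =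
        Finset.Icc (Q+1) (2*Q) ∪ Finset.Icc (3*Q+1) (4*Q) := by
      apply Finset.Subset.antisymm
      · intro x hx
        rw [Finset.mem_sdiff] at hx
        obtain ⟨hxU, hxR⟩ := hx
        have hx4 : x ∈ Finset.Icc 1 (4*Q) := by
          obtain ⟨i, _, hxi⟩ := Finset.mem_biUnion.1 hxU
          exact hsub i hxi
        rw [Finset.mem_Icc] at hx4
        simp only [Finset.mem_union, Finset.mem_Icc] at hxR ⊢
        omega
      · intro x hx
        rw [Finset.mem_sdiff]
        constructor
        · rcases Finset.mem_union.1 hx with h | h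
          · exact hg1 h
          · exact hg2 h
        · simp only [Finset.mem_union, Finset.mem_Icc] at hx ⊢
          omega
    rw [hkey, hFcard]
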